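/- arXiv:2311.10616 — 6 statements merged into one kernel-verified Lean document; each statement's English description precedes it below -/
import Mathlib

section
/- Let G be a graph on n vertices with arboricity at most α. Define Z_1 = V(G) and Z_{i+1} = {v ∈ Z_i : deg_{Z_i}(v) > 4α}. Then Z_{⌈log₂ n⌉ + 1} is empty, i.e., the H-partition with threshold 4α has at most ⌈log₂ n⌉ + 1 levels. -/
open scoped Classical

/-- Handshake lemma restricted to a vertex subset `Z`. -/
lemma handshake_aux {V : Type*} [Fintype V] (G : SimpleGraph V) (Z : Finset V) :
    ∑ v ∈ Z, ((Z.filter fun u => G.Adj v u).card)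
      = 2 * ((G.edgeFinset.filter fun e => ∀ x ∈ e, x ∈ Z).card) := by
  classical
  rw [← Finset.card_sigma]
  rw [Finset.card_eq_sum_card_fiberwise
      (f := fun x : (_ : V) × V => s(x.1, x.2))
      (t := G.edgeFinset.filter fun e => ∀ x ∈ e, x ∈ Z) ?_]
  · rw [Finset.sum_congr rfl (g := fun _ => 2) ?_, Finset.sum_const, smul_eq_mul,
        mul_comm]
    intro e he
    simp only [Finset.mem_filter, SimpleGraph.mem_edgeFinset] at he
    obtain ⟨he, hZe⟩ := he
    induction e using Sym2.ind with
    | _ a b =>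
      have hadj : G.Adj a b := he
      have hab : a ≠ b := G.ne_of_adj hadj
      have haZ : a ∈ Z := hZe a (by simp)
      have hbZ : b ∈ Z := hZe b (by simp)
      have : ((Z.sigma fun v => Z.filter fun u => G.Adj v u).filter
          fun x => s(x.1, x.2) = s(a, b)) = {⟨a, b⟩, ⟨b, a⟩} := by
        ext x
        simp only [Finset.mem_filter, Finset.mem_sigma, Finset.mem_insert,
          Finset.mem_singleton, Sym2.eq_iff]
        constructor
        · rintro ⟨⟨hx1, hx2, -⟩, (⟨rfl, rfl⟩ | ⟨rfl, rfl⟩)⟩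
          · left; rfl
          · right; rfl
        · rintro (rfl | rfl)
          · exact ⟨⟨haZ, hbZ, hadj⟩, Or.inl ⟨rfl, rfl⟩⟩
          · exact ⟨⟨hbZ, haZ, hadj.symm⟩, Or.inr ⟨rfl, rfl⟩⟩
      rw [this]
      rw [Finset.card_pair]
      intro h
      exact hab (congrArg Sigma.fst h)
  · intro x hx
    simp only [Finset.mem_coe, Finset.mem_sigma, Finset.mem_filter] at hx
    obtain ⟨hx1, hx2, hadj⟩ := hx
    simp only [Finset.mem_coe, Finset.mem_filter, SimpleGraph.mem_edgeFinset]
    refine ⟨hadj, ?_⟩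
    intro y hy
    rw [Sym2.mem_iff] at hy
    rcases hy with rfl | rfl <;> assumption

/-- With `Z 1 = V(G)` and `Z (i+1) = {v ∈ Z i : deg_{Z i}(v) > 4α}`,
the set `Z (⌈log₂ n⌉ + 1)` is empty: the H-partition with threshold `4α` has at most
`⌈log₂ n⌉ + 1` levels (here `n ≥ 2`). -/
theorem stmt5 {V : Type*} [Fintype V] (G : SimpleGraph V) (α : ℕ)
    (hn : 2 ≤ Fintype.card V)
    (harb : ∀ U : Finset V, 2 ≤ U.card →
      (G.edgeFinset.filter fun e => ∀ x ∈ e, x ∈ U).card ≤ α * (U.card - 1))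
    (Z : ℕ → Finset V) (hZ1 : Z 1 = Finset.univ)
    (hZ : ∀ i, 1 ≤ i →
      Z (i+1) = (Z i).filter fun v => 4 * α < ((Z i).filter fun u => G.Adj v u).card) :
    Z (Nat.clog 2 (Fintype.card V) + 1) = ∅ := by
  classical
  set n := Fintype.card V with hn_def
  -- key shrinking step
  have key : ∀ i, 1 ≤ i → (Z (i+1)).Nonempty → 2 * (Z (i+1)).card + 1 ≤ (Z i).card := by
    intro i hi hne
    have hZi := hZ i hi
    have hsub : Z (i+1) ⊆ Z i := by rw [hZi]; exact Finset.filter_subset _ _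
    have hdeg : ∀ v ∈ Z (i+1), 4*α + 1 ≤ ((Z i).filter fun u => G.Adj v u).card := by
      intro v hv; rw [hZi] at hv; exact (Finset.mem_filter.1 hv).2
    -- Z i has at least 2 elements
    obtain ⟨v, hv⟩ := hne
    have hvdeg := hdeg v hv
    have hd : 0 < ((Z i).filter fun u => G.Adj v u).card := by omega
    obtain ⟨u, hu⟩ := Finset.card_pos.1 hd
    have huZ : u ∈ Z i := (Finset.mem_filter.1 hu).1
    have huv : G.Adj v u := (Finset.mem_filter.1 hu).2
    have h2 : 2 ≤ (Z i).card := by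
      exact Finset.one_lt_card_iff.2 ⟨v, u, hsub hv, huZ, huv.ne⟩
    have hsum1 : (4*α+1) * (Z (i+1)).card
        ≤ ∑ w ∈ Z i, ((Z i).filter fun u => G.Adj w u).card := by
      calc (4*α+1) * (Z (i+1)).card = ∑ _w ∈ Z (i+1), (4*α+1) := by
            rw [Finset.sum_const, smul_eq_mul, mul_comm]
        _ ≤ ∑ w ∈ Z (i+1), ((Z i).filter fun u => G.Adj w u).card :=
            Finset.sum_le_sum hdeg
        _ ≤ ∑ w ∈ Z i, ((Z i).filter fun u => G.Adj w u).card :=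
            Finset.sum_le_sum_of_subset hsub
    have hhs := handshake_aux G (Z i)
    have he := harb (Z i) h2
    have hmain : (4*α+1) * (Z (i+1)).card ≤ 2 * (α * ((Z i).card - 1)) := by
      calc (4*α+1) * (Z (i+1)).card
          ≤ ∑ w ∈ Z i, ((Z i).filter fun u => G.Adj w u).card := hsum1
        _ = 2 * ((G.edgeFinset.filter fun e => ∀ x ∈ e, x ∈ Z i).card) := hhs
        _ ≤ 2 * (α * ((Z i).card - 1)) := Nat.mul_le_mul_left 2 he
    -- now pure arithmetic
    have hz1 : 1 ≤ (Z (i+1)).card := Finset.card_pos.2 ⟨v, hv⟩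
    by_contra hcon
    push_neg at hcon
    -- (Z i).card ≤ 2 * card + so on
    have hzz : (Z i).card ≤ 2 * (Z (i+1)).card := by omega
    set z := (Z i).card
    set z' := (Z (i+1)).card
    have h1 : (z : ℤ) - 1 = ((z - 1 : ℕ) : ℤ) := by
      have : 1 ≤ z := by omega
      omega
    have hmainZ : (4*(α:ℤ)+1) * z' ≤ 2 * (α * ((z:ℤ) - 1)) := by
      rw [h1]; exact_mod_cast hmain
    have hzzZ : (z : ℤ) ≤ 2 * z' := by exact_mod_cast hzz
    have hz1Z : (1 : ℤ) ≤ z' := by exact_mod_cast hz1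
    have h2Z : (2 : ℤ) ≤ z := by exact_mod_cast h2
    nlinarith [mul_le_mul_of_nonneg_left (by linarith : (z:ℤ) - 1 ≤ 2*z' - 1)
      (by positivity : (0:ℤ) ≤ (α:ℤ))]
  -- induction: as long as levels are nonempty, they halve
  have main : ∀ k, (Z (k+1)).Nonempty → 2^k * (Z (k+1)).card + 2^k ≤ n + 1 := by
    intro k
    induction k with
    | zero =>
      intro _
      simp only [pow_zero, one_mul, hZ1, Finset.card_univ]
      exact le_refl _
    | succ k ih =>
      intro hne
      have hkey : 2 * (Z (k+2)).card + 1 ≤ (Z (k+1)).card := key (k+1) (by omega) hne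
      have hne' : (Z (k+1+1)).Nonempty := hne
      have hcard : 0 < (Z (k+1)).card := by omega
      have ih' := ih (Finset.card_pos.1 hcard)
      calc 2^(k+1) * (Z (k+2)).card + 2^(k+1)
          = 2^k * (2 * (Z (k+2)).card + 1) + 2^k := by ring
        _ ≤ 2^k * (Z (k+1)).card + 2^k := by
            have := Nat.mul_le_mul_left (2^k) hkey
            omega
        _ ≤ n + 1 := ih'
  by_contra hne0
  have hne : (Z (Nat.clog 2 n + 1)).Nonempty := Finset.nonempty_iff_ne_empty.2 hne0
  have h1 := main (Nat.clog 2 n) hne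
  have h2 : n ≤ 2 ^ Nat.clog 2 n := Nat.le_pow_clog (by norm_num) n
  have hz := Finset.card_pos.2 hne
  have h3 : 2 ^ Nat.clog 2 n * 1 ≤ 2 ^ Nat.clog 2 n * (Z (Nat.clog 2 n + 1)).card :=
    Nat.mul_le_mul_left _ hz
  rw [mul_one] at h3
  have h4 : 2 ^ Nat.clog 2 n + 2 ^ Nat.clog 2 n ≤ n + 1 := le_trans (by omega) h1
  omega
end

section
/- Let G be a graph, and suppose the vertices are ordered v_1, ..., v_n such that every vertex v_i has at most d neighbours among {v_{i+1}, ..., v_n} (a d-out-degree ordering). Then G admits a proper edge colouring f : E → ℕ such that each edge v_i v_j (i < j) satisfies f(v_i v_j) ≤ max(deg(v_i), deg(v_j)) + d - 1. -/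
open scoped Classical

noncomputable section AuxStmt6

variable {V : Type*} [Fintype V]

def elo (ord : V ≃ Fin (Fintype.card V)) : Sym2 V → ℕ :=
  Sym2.lift ⟨fun a b => min (ord a : ℕ) (ord b : ℕ), fun a b => min_comm _ _⟩

def ehi (ord : V ≃ Fin (Fintype.card V)) : Sym2 V → ℕ :=
  Sym2.lift ⟨fun a b => max (ord a : ℕ) (ord b : ℕ), fun a b => max_comm _ _⟩

def ekey (ord : V ≃ Fin (Fintype.card V)) (e : Sym2 V) : ℕ :=
  (Fintype.card V - elo ord e) * Fintype.card V + ehi ord e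

lemma elo_mk (ord : V ≃ Fin (Fintype.card V)) (a b : V) :
    elo ord s(a, b) = min (ord a : ℕ) (ord b : ℕ) := rfl

lemma ehi_mk (ord : V ≃ Fin (Fintype.card V)) (a b : V) :
    ehi ord s(a, b) = max (ord a : ℕ) (ord b : ℕ) := rfl

lemma ehi_lt (ord : V ≃ Fin (Fintype.card V)) (e : Sym2 V) :
    ehi ord e < Fintype.card V := by
  induction e using Sym2.ind with
  | _ a b => simp [ehi_mk, Fin.is_lt]

lemma elo_le_ehi (ord : V ≃ Fin (Fintype.card V)) (e : Sym2 V) :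
    elo ord e ≤ ehi ord e := by
  induction e using Sym2.ind with
  | _ a b => rw [elo_mk, ehi_mk]; exact min_le_max

lemma keyArithLt {n a b a' b' : ℕ} (hb' : b' < n) (h : a < a') (h2 : a' < n) :
    (n - a') * n + b' < (n - a) * n + b := by
  have h1 : (n - a' + 1) * n = (n - a') * n + n := by ring
  have h3 : n - a' + 1 ≤ n - a := by omega
  calc (n - a') * n + b' < (n - a' + 1) * n := by omega
    _ ≤ (n - a) * n := Nat.mul_le_mul_right n h3
    _ ≤ (n - a) * n + b := Nat.le_add_right _ _

lemma keyArith {n a b a' b' : ℕ} (hb : b < n) (hb' : b' < n) (ha : a ≤ b) (ha' : a' ≤ b') :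
    (n - a') * n + b' < (n - a) * n + b ↔ a < a' ∨ (a = a' ∧ b' < b) := by
  rcases lt_trichotomy a a' with h | h | h
  · have H := keyArithLt (b := b) hb' h (by omega)
    constructor
    · intro _; exact Or.inl h
    · intro _; exact H
  · subst h
    rw [add_lt_add_iff_left]
    omega
  · have H := keyArithLt (b := b') (b' := b) hb h (by omega)
    omega

lemma ekey_lt_iff (ord : V ≃ Fin (Fintype.card V)) (e e' : Sym2 V) :
    ekey ord e' < ekey ord e ↔
      elo ord e < elo ord e' ∨ (elo ord e = elo ord e' ∧ ehi ord e' < ehi ord e) := by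
  rw [ekey, ekey,
    keyArith (ehi_lt ord e) (ehi_lt ord e') (elo_le_ehi ord e) (elo_le_ehi ord e')]

lemma eq_of_lohi_eq (ord : V ≃ Fin (Fintype.card V)) (e e' : Sym2 V)
    (hlo : elo ord e = elo ord e') (hhi : ehi ord e = ehi ord e') : e = e' := by
  induction e using Sym2.ind with
  | _ a b =>
    induction e' using Sym2.ind with
    | _ c d =>
      simp only [elo_mk, ehi_mk] at hlo hhi
      have inj : ∀ x y : V, (ord x : ℕ) = (ord y : ℕ) → x = y := by
        intro x y h
        exact ord.injective (Fin.ext h)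
      rcases le_total (ord a : ℕ) (ord b : ℕ) with h1 | h1 <;>
        rcases le_total (ord c : ℕ) (ord d : ℕ) with h2 | h2
      · have := inj a c (by omega); have := inj b d (by omega); subst this; subst this; rfl
      · have := inj a d (by omega); have := inj b c (by omega)
        subst this; subst this; exact Sym2.eq_swap
      · have := inj a d (by omega); have := inj b c (by omega)
        subst this; subst this; exact Sym2.eq_swap
      · have := inj a c (by omega); have := inj b d (by omega); subst this; subst this; rfl

lemma ekey_inj (ord : V ≃ Fin (Fintype.card V)) (e e' : Sym2 V)
    (h : ekey ord e = ekey ord e') : e = e' := by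
  have h1 : ¬ ekey ord e' < ekey ord e := by omega
  have h2 : ¬ ekey ord e < ekey ord e' := by omega
  rw [ekey_lt_iff] at h1 h2
  push_neg at h1 h2
  have hlo : elo ord e = elo ord e' := le_antisymm h2.1 h1.1
  refine eq_of_lohi_eq ord e e' hlo ?_
  have := h1.2 hlo
  have := h2.2 hlo.symm
  omega

def forbidSet (G : SimpleGraph V) (ord : V ≃ Fin (Fintype.card V)) (e : Sym2 V) :
    Finset (Sym2 V) :=
  G.edgeFinset.filter fun e' => (∃ x, x ∈ e ∧ x ∈ e') ∧ ekey ord e' < ekey ord e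

lemma exists_avoid (F : Finset ℕ) : ∃ c : ℕ, 1 ≤ c ∧ c ∉ F := by
  refine ⟨F.sup id + 1, by omega, fun h => ?_⟩
  have := Finset.le_sup (f := id) h
  simp only [id] at this
  omega

def col (G : SimpleGraph V) (ord : V ≃ Fin (Fintype.card V)) (e : Sym2 V) : ℕ :=
  Nat.find (exists_avoid ((forbidSet G ord e).attach.image fun e' => col G ord e'.1))
termination_by ekey ord e
decreasing_by
  all_goals exact (Finset.mem_filter.mp e'.2).2.2

lemma col_spec (G : SimpleGraph V) (ord : V ≃ Fin (Fintype.card V)) (e : Sym2 V) :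
    1 ≤ col G ord e ∧
      col G ord e ∉ (forbidSet G ord e).attach.image fun e' => col G ord e'.1 := by
  rw [col]
  exact Nat.find_spec (exists_avoid _)

lemma col_min (G : SimpleGraph V) (ord : V ≃ Fin (Fintype.card V)) (e : Sym2 V) (c : ℕ)
    (hc : 1 ≤ c ∧ c ∉ (forbidSet G ord e).attach.image fun e' => col G ord e'.1) :
    col G ord e ≤ c := by
  rw [col]
  exact Nat.find_min' (exists_avoid _) hc

lemma col_ne (G : SimpleGraph V) (ord : V ≃ Fin (Fintype.card V)) (e1 e2 : Sym2 V)
    (h1 : e1 ∈ G.edgeFinset) (h2 : e2 ∈ G.edgeFinset) (x : V) (hx1 : x ∈ e1) (hx2 : x ∈ e2)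
    (hne : e1 ≠ e2) : col G ord e1 ≠ col G ord e2 := by
  have main : ∀ a b : Sym2 V, a ∈ G.edgeFinset → x ∈ a → x ∈ b →
      ekey ord a < ekey ord b → col G ord b ≠ col G ord a := by
    intro a b ha hxa hxb hk
    have hmem : a ∈ forbidSet G ord b :=
      Finset.mem_filter.mpr ⟨ha, ⟨x, hxb, hxa⟩, hk⟩
    have : col G ord a ∈ (forbidSet G ord b).attach.image fun e' => col G ord e'.1 :=
      Finset.mem_image.mpr ⟨⟨a, hmem⟩, Finset.mem_attach _ _, rfl⟩
    intro hc
    exact (col_spec G ord b).2 (hc ▸ this)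
  have hk : ekey ord e1 ≠ ekey ord e2 := fun h => hne (ekey_inj ord e1 e2 h)
  rcases lt_or_gt_of_ne hk with h | h
  · exact (main e1 e2 h1 hx1 hx2 h).symm
  · exact main e2 e1 h2 hx2 hx1 h

lemma col_bound (G : SimpleGraph V) (ord : V ≃ Fin (Fintype.card V)) (d : ℕ)
    (hord : ∀ v : V, (Finset.univ.filter fun u => G.Adj v u ∧ ord v < ord u).card ≤ d)
    (u v : V) (huv : G.Adj u v) (hlt : (ord u : ℕ) < (ord v : ℕ)) :
    col G ord s(u, v) ≤ max (G.degree u) (G.degree v) + d - 1 := by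
  classical
  set e := s(u, v) with he
  set A : Finset (Sym2 V) :=
    ((Finset.univ.filter fun w => G.Adj u w ∧ ord u < ord w).erase v).image
      (fun w => s(u, w)) with hA
  set B : Finset (Sym2 V) :=
    ((G.neighborFinset v).erase u).image (fun w => s(v, w)) with hB
  have hvmem : v ∈ Finset.univ.filter fun w => G.Adj u w ∧ ord u < ord w := by
    simp only [Finset.mem_filter, Finset.mem_univ, true_and]
    exact ⟨huv, by rwa [Fin.lt_def]⟩
  have hdpos : 1 ≤ d := le_trans (Finset.card_pos.mpr ⟨v, hvmem⟩) (hord u)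
  have hdegv : 1 ≤ G.degree v := by
    rw [← SimpleGraph.card_neighborFinset_eq_degree]
    exact Finset.card_pos.mpr ⟨u, (SimpleGraph.mem_neighborFinset G v u).mpr huv.symm⟩
  -- subset claim
  have hsub : forbidSet G ord e ⊆ A ∪ B := by
    intro e' he'
    rw [forbidSet, Finset.mem_filter] at he'
    obtain ⟨hedge, ⟨x, hxe, hxe'⟩, hkey⟩ := he'
    rw [ekey_lt_iff] at hkey
    -- x = u or x = v
    rw [he, Sym2.mem_iff] at hxe
    -- helper to handle membership in a Sym2
    have case_u : u ∈ e' → e' ∈ A ∪ B := by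
      intro hu
      induction e' using Sym2.ind with
      | _ a b =>
        rw [Sym2.mem_iff] at hu
        -- reduce both orientations to one
        have key : ∀ w : V, s(u, w) ∈ G.edgeFinset →
            (elo ord e < elo ord s(u, w) ∨
              elo ord e = elo ord s(u, w) ∧ ehi ord s(u, w) < ehi ord e) →
            s(u, w) ∈ A ∪ B := by
          intro w hw hk
          have hadj : G.Adj u w := by
            rwa [SimpleGraph.mem_edgeFinset, SimpleGraph.mem_edgeSet] at hw
          have hwu : (ord w : ℕ) ≠ (ord u : ℕ) := by
            intro hh
            exact hadj.ne' (ord.injective (Fin.ext hh))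
          rw [he, elo_mk, ehi_mk, elo_mk, ehi_mk] at hk
          have h1 : (ord u : ℕ) < ord w ∧ (ord w : ℕ) < ord v := by omega
          refine Finset.mem_union_left _ (Finset.mem_image.mpr ⟨w, ?_, rfl⟩)
          refine Finset.mem_erase.mpr ⟨?_, ?_⟩
          · intro hh; subst hh; omega
          · simp only [Finset.mem_filter, Finset.mem_univ, true_and]
            exact ⟨hadj, by rw [Fin.lt_def]; exact h1.1⟩
        rcases hu with hu | hu
        · subst hu; exact key b hedge hkey
        · subst hu
          rw [Sym2.eq_swap] at hedge hkey ⊢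
          exact key a hedge hkey
    have case_v : v ∈ e' → e' ≠ e → e' ∈ A ∪ B := by
      intro hv hne
      induction e' using Sym2.ind with
      | _ a b =>
        rw [Sym2.mem_iff] at hv
        have key : ∀ w : V, s(v, w) ∈ G.edgeFinset → s(v, w) ≠ e → s(v, w) ∈ A ∪ B := by
          intro w hw hne'
          have hadj : G.Adj v w := by
            rwa [SimpleGraph.mem_edgeFinset, SimpleGraph.mem_edgeSet] at hw
          have hwu : w ≠ u := by
            intro hh; subst hh
            exact hne' (by rw [he, Sym2.eq_swap])
          refine Finset.mem_union_right _ (Finset.mem_image.mpr ⟨w, ?_, rfl⟩)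
          exact Finset.mem_erase.mpr ⟨hwu, (SimpleGraph.mem_neighborFinset G v w).mpr hadj⟩
        rcases hv with hv | hv
        · subst hv; exact key b hedge hne
        · subst hv
          rw [Sym2.eq_swap] at hedge hne ⊢
          exact key a hedge hne
    have hne : e' ≠ e := by
      intro hh; subst hh; omega
    rcases hxe with hx | hx
    · subst hx; exact case_u hxe'
    · subst hx; exact case_v hxe' hne
  -- cardinalities
  have hAcard : A.card ≤ d - 1 := by
    calc A.card ≤ ((Finset.univ.filter fun w => G.Adj u w ∧ ord u < ord w).erase v).card :=
          Finset.card_image_le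
      _ = (Finset.univ.filter fun w => G.Adj u w ∧ ord u < ord w).card - 1 :=
          Finset.card_erase_of_mem hvmem
      _ ≤ d - 1 := by have := hord u; omega
  have hBcard : B.card ≤ G.degree v - 1 := by
    calc B.card ≤ ((G.neighborFinset v).erase u).card := Finset.card_image_le
      _ = (G.neighborFinset v).card - 1 :=
          Finset.card_erase_of_mem ((SimpleGraph.mem_neighborFinset G v u).mpr huv.symm)
      _ = G.degree v - 1 := by rw [SimpleGraph.card_neighborFinset_eq_degree]
  have hScard : (forbidSet G ord e).card ≤ (d - 1) + (G.degree v - 1) := by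
    calc (forbidSet G ord e).card ≤ (A ∪ B).card := Finset.card_le_card hsub
      _ ≤ A.card + B.card := Finset.card_union_le A B
      _ ≤ (d - 1) + (G.degree v - 1) := by omega
  -- find a colour below the bound
  set F := (forbidSet G ord e).attach.image fun e' => col G ord e'.1 with hF
  have hFcard : F.card ≤ (d - 1) + (G.degree v - 1) := by
    calc F.card ≤ (forbidSet G ord e).attach.card := Finset.card_image_le
      _ = (forbidSet G ord e).card := Finset.card_attach
      _ ≤ _ := hScard
  have hex : ∃ c ∈ Finset.Icc 1 (F.card + 1), c ∉ F := by
    by_contra hcon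
    push_neg at hcon
    have hsub2 : Finset.Icc 1 (F.card + 1) ⊆ F := fun c hc => hcon c hc
    have := Finset.card_le_card hsub2
    rw [Nat.card_Icc] at this
    omega
  obtain ⟨c, hc1, hc2⟩ := hex
  rw [Finset.mem_Icc] at hc1
  have hle : col G ord e ≤ c := col_min G ord e c ⟨hc1.1, hc2⟩
  have hmax : G.degree v ≤ max (G.degree u) (G.degree v) := le_max_right _ _
  omega

end AuxStmt6

/-- If the vertices are ordered `v_1, ..., v_n` so that every vertex has at most
`d` neighbours later in the order, then `G` has a proper edge colouring in which each edge
`v_i v_j` (`i < j`) gets a colour in `{1, ..., max(deg v_i, deg v_j) + d - 1}`. -/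
theorem stmt6 {V : Type*} [Fintype V] (G : SimpleGraph V) (d : ℕ)
    (ord : V ≃ Fin (Fintype.card V))
    (hord : ∀ v : V, (Finset.univ.filter fun u => G.Adj v u ∧ ord v < ord u).card ≤ d) :
    ∃ f : Sym2 V → ℕ,
      (∀ u v w : V, G.Adj u v → G.Adj u w → v ≠ w → f s(u, v) ≠ f s(u, w)) ∧
      (∀ u v : V, G.Adj u v →
        1 ≤ f s(u, v) ∧ f s(u, v) ≤ max (G.degree u) (G.degree v) + d - 1) := by
  classical
  refine ⟨col G ord, ?_, ?_⟩
  · intro u v w huv huw hvw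
    refine col_ne G ord s(u, v) s(u, w) ?_ ?_ u ?_ ?_ ?_
    · exact SimpleGraph.mem_edgeFinset.mpr huv
    · exact SimpleGraph.mem_edgeFinset.mpr huw
    · simp
    · simp
    · intro h; exact hvw (Sym2.congr_right.mp h)
  · intro u v huv
    refine ⟨(col_spec G ord _).1, ?_⟩
    rcases lt_trichotomy ((ord u : ℕ)) ((ord v : ℕ)) with h | h | h
    · exact col_bound G ord d hord u v huv h
    · exact absurd (ord.injective (Fin.ext h)) huv.ne
    · have hswap : s(u, v) = s(v, u) := Sym2.eq_swap
      rw [hswap, max_comm]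
      exact col_bound G ord d hord v u huv.symm h
end

section
/- Every graph G with arboricity α and maximum degree Δ admits a proper edge colouring using at most Δ + 2α - 2 colours, such that moreover every edge uv receives a colour in {1, ..., max(deg(u), deg(v)) + 2α - 2}. -/
open scoped Classical

open Finset SimpleGraph

private lemma myIsAcyclicAnti {V : Type*} {H G : SimpleGraph V} (h : H ≤ G)
    (hG : G.IsAcyclic) : H.IsAcyclic := fun _ c hc => hG (c.mapLe h) (hc.mapLe h)

private lemma myExistsLeaf {V : Type*} [Fintype V] {F : SimpleGraph V} (hac : F.IsAcyclic)
    {a b : V} (hab : F.Adj a b) :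
    ∃ x y : V, F.Adj x y ∧ ∀ z, F.Adj x z → z = y := by
  have hcard : (1 : ℕ) ≤ Fintype.card V := Fintype.card_pos_iff.mpr ⟨a⟩
  set P : ℕ → Prop := fun n => ∃ (x y : V) (p : F.Walk x y), p.IsPath ∧ p.length = n with hPdef
  have h1 : P 1 := ⟨a, b, Walk.cons hab Walk.nil, by simp [Walk.isPath_def, hab.ne], by simp⟩
  set n := Nat.findGreatest P (Fintype.card V) with hn
  have hPn : P n := Nat.findGreatest_spec hcard h1
  have hn1 : 1 ≤ n := Nat.le_findGreatest hcard h1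
  obtain ⟨u, w, p, hp, hlen⟩ := hPn
  cases p with
  | nil => simp at hlen; omega
  | @cons _ y _ h q =>
    have hq : q.IsPath ∧ u ∉ q.support := (Walk.cons_isPath_iff h q).mp hp
    refine ⟨u, y, h, fun z hz => ?_⟩
    by_contra hzy
    by_cases hzs : z ∈ (Walk.cons h q).support
    · rw [Walk.support_cons, List.mem_cons] at hzs
      rcases hzs with rfl | hzq
      · exact hz.ne rfl
      · set A : F.Walk u z := Walk.cons h (q.takeUntil z hzq) with hA
        have hAp : A.IsPath := (Walk.cons_isPath_iff _ _).mpr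
          ⟨hq.1.takeUntil hzq, fun hu => hq.2 (Walk.support_takeUntil_subset q hzq hu)⟩
        set B : F.Walk u z := Walk.cons hz Walk.nil with hB
        have hBp : B.IsPath := by simp [hB, Walk.isPath_def, hz.ne]
        have hAB : A = B := by
          have := hac.path_unique ⟨A, hAp⟩ ⟨B, hBp⟩
          exact congrArg Subtype.val this
        have hlenAB := congrArg Walk.length hAB
        simp [hA, hB] at hlenAB
        exact hzy hlenAB.symm
    · have hWp : (Walk.cons hz.symm (Walk.cons h q)).IsPath :=
        (Walk.cons_isPath_iff _ _).mpr ⟨hp, hzs⟩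
      have hWlen : (Walk.cons hz.symm (Walk.cons h q)).length = n + 1 := by simp [hlen]
      have hlt : n + 1 ≤ Fintype.card V := by
        have := hWp.length_lt
        omega
      exact Nat.findGreatest_is_greatest (hn ▸ Nat.lt_succ_self n) hlt
        ⟨z, w, _, hWp, hWlen⟩

private lemma myForestCard {V : Type*} [Fintype V] :
    ∀ (m : ℕ) (F : SimpleGraph V) [Fintype F.edgeSet], F.edgeFinset.card ≤ m → F.IsAcyclic →
      F.edgeFinset.Nonempty →
      F.edgeFinset.card + 1 ≤ (Finset.univ.filter fun v => 0 < F.degree v).card := by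
  intro m
  induction m with
  | zero =>
    intro F _ hc _ hne
    have := Finset.card_pos.mpr hne
    omega
  | succ m ih =>
    intro F _ hc hac hne
    obtain ⟨e, he⟩ := hne
    induction e using Sym2.ind with
    | _ x y =>
    have hxy : F.Adj x y := (mem_edgeFinset.mp he)
    obtain ⟨b, c, hbc, hleaf⟩ := myExistsLeaf hac hxy
    set F' := F.deleteEdges {s(b, c)} with hF'
    have hle : F' ≤ F := F.deleteEdges_le _
    have hedges : F'.edgeFinset = F.edgeFinset.erase s(b, c) := by
      ext e
      simp only [mem_edgeFinset, hF', edgeSet_deleteEdges, Set.mem_diff, Set.mem_singleton_iff,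
        Finset.mem_erase, mem_edgeFinset]
      tauto
    have he0 : s(b, c) ∈ F.edgeFinset := mem_edgeFinset.mpr hbc
    have hcard' : F'.edgeFinset.card = F.edgeFinset.card - 1 := by
      rw [hedges, Finset.card_erase_of_mem he0]
    have hbS : b ∈ Finset.univ.filter fun v => 0 < F.degree v := by
      simp [degree_pos_iff_exists_adj]
      exact ⟨c, hbc⟩
    have hcS : c ∈ Finset.univ.filter fun v => 0 < F.degree v := by
      simp [degree_pos_iff_exists_adj]
      exact ⟨b, hbc.symm⟩
    have hS' : (Finset.univ.filter fun v => 0 < F'.degree v) ⊆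
        (Finset.univ.filter fun v => 0 < F.degree v).erase b := by
      intro v hv
      simp only [Finset.mem_filter, Finset.mem_univ, true_and,
        degree_pos_iff_exists_adj] at hv
      obtain ⟨w, hw⟩ := hv
      rw [hF', deleteEdges_adj] at hw
      refine Finset.mem_erase.mpr ⟨?_, ?_⟩
      · rintro rfl
        exact hw.2 (by rw [hleaf w hw.1]; exact Set.mem_singleton _)
      · simp only [Finset.mem_filter, Finset.mem_univ, true_and,
          degree_pos_iff_exists_adj]
        exact ⟨w, hw.1⟩
    by_cases hne' : F'.edgeFinset.Nonempty
    · have hIH := ih F' (by omega) (myIsAcyclicAnti hle hac) hne'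
      have h1 := Finset.card_le_card hS'
      rw [Finset.card_erase_of_mem hbS] at h1
      have hpos := Finset.card_pos.mpr ⟨b, hbS⟩
      have h2 := Finset.card_pos.mpr ⟨s(b,c), he0⟩
      have h3 : F'.edgeFinset.card + 1 ≤ (Finset.univ.filter fun v => 0 < F'.degree v).card := by
        convert hIH
      omega
    · have hc1 : F.edgeFinset.card = 1 := by
        rw [Finset.not_nonempty_iff_eq_empty] at hne'
        have h3 : F.edgeFinset.card - 1 = 0 := by
          rw [← Finset.card_erase_of_mem he0, ← hedges, hne', Finset.card_empty]
        have h2 := Finset.card_pos.mpr ⟨s(b,c), he0⟩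
        omega
      have hsub : ({b, c} : Finset V) ⊆ Finset.univ.filter fun v => 0 < F.degree v := by
        intro v hv
        rcases Finset.mem_insert.mp hv with rfl | hv
        · exact hbS
        · rw [Finset.mem_singleton.mp hv]; exact hcS
      have := Finset.card_le_card hsub
      rw [Finset.card_insert_of_notMem (by simp [hbc.ne]), Finset.card_singleton] at this
      omega

private lemma myExistsLow {V : Type*} [Fintype V] {G : SimpleGraph V} {α : ℕ}
    (harb : ∃ c : Sym2 V → ℕ, (∀ e ∈ G.edgeSet, c e < α) ∧
      ∀ i, (SimpleGraph.fromEdgeSet {e | e ∈ G.edgeSet ∧ c e = i}).IsAcyclic)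
    {H : SimpleGraph V} (hle : H ≤ G) (hne : H.edgeFinset.Nonempty) :
    ∃ u, 0 < H.degree u ∧ H.degree u ≤ 2 * α - 1 := by
  obtain ⟨c, hcα, hforest⟩ := harb
  set S := Finset.univ.filter fun v => 0 < H.degree v with hS
  obtain ⟨e, he⟩ := hne
  have heH : e ∈ H.edgeSet := mem_edgeFinset.mp he
  have heG : e ∈ G.edgeSet := edgeSet_mono hle heH
  have hα : 1 ≤ α := by have := hcα e heG; omega
  -- S nonempty
  have hSne : S.Nonempty := by
    induction e using Sym2.ind with
    | _ x y =>
      exact ⟨x, by simp [hS, degree_pos_iff_exists_adj]; exact ⟨y, heH⟩⟩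
  have hS1 : 1 ≤ S.card := Finset.card_pos.mpr hSne
  -- the forests
  set Fi : ℕ → SimpleGraph V := fun i =>
    SimpleGraph.fromEdgeSet {e | e ∈ H.edgeSet ∧ c e = i} with hFi
  have hFiacyclic : ∀ i, (Fi i).IsAcyclic := by
    intro i
    refine myIsAcyclicAnti ?_ (hforest i)
    apply SimpleGraph.fromEdgeSet_mono
    intro e' he'
    exact ⟨edgeSet_mono hle he'.1, he'.2⟩
  have hFiH : ∀ i, Fi i ≤ H := by
    intro i
    intro x y hxy
    rw [hFi] at hxy
    simp only [fromEdgeSet_adj, Set.mem_setOf_eq] at hxy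
    exact hxy.1.1
  have hFibound : ∀ i, (Fi i).edgeFinset.card ≤ S.card - 1 := by
    intro i
    by_cases hni : (Fi i).edgeFinset.Nonempty
    · have h1 := myForestCard _ (Fi i) le_rfl (hFiacyclic i) hni
      have h2 : (Finset.univ.filter fun v => 0 < (Fi i).degree v) ⊆ S := by
        intro v hv
        simp only [Finset.mem_filter, Finset.mem_univ, true_and,
          degree_pos_iff_exists_adj] at hv ⊢
        obtain ⟨w, hw⟩ := hv
        rw [hS]
        simp only [Finset.mem_filter, Finset.mem_univ, true_and,
          degree_pos_iff_exists_adj]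
        exact ⟨w, hFiH i hw⟩
      have h3 := Finset.card_le_card h2
      have h4 : (Fi i).edgeFinset.card + 1 ≤
          (Finset.univ.filter fun v => 0 < (Fi i).degree v).card := by
        convert h1
      omega
    · rw [Finset.not_nonempty_iff_eq_empty] at hni
      rw [hni]
      simp
  -- cover
  have hcover : H.edgeFinset ⊆ (Finset.range α).biUnion fun i => (Fi i).edgeFinset := by
    intro e' he'
    have heH' : e' ∈ H.edgeSet := mem_edgeFinset.mp he'
    have heG' : e' ∈ G.edgeSet := edgeSet_mono hle heH'
    refine Finset.mem_biUnion.mpr ⟨c e', Finset.mem_range.mpr (hcα e' heG'), ?_⟩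
    rw [mem_edgeFinset, hFi]
    rw [edgeSet_fromEdgeSet]
    exact ⟨⟨heH', rfl⟩, not_isDiag_of_mem_edgeSet H heH'⟩
  have hEbound : H.edgeFinset.card ≤ α * (S.card - 1) := by
    calc H.edgeFinset.card ≤ ((Finset.range α).biUnion fun i => (Fi i).edgeFinset).card :=
          Finset.card_le_card hcover
      _ ≤ ∑ i ∈ Finset.range α, (Fi i).edgeFinset.card := Finset.card_biUnion_le
      _ ≤ ∑ _i ∈ Finset.range α, (S.card - 1) := Finset.sum_le_sum fun i _ => hFibound i
      _ = α * (S.card - 1) := by rw [Finset.sum_const, Finset.card_range, smul_eq_mul]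
  -- degree sum
  by_contra hcon
  push_neg at hcon
  have hdeg : ∀ v ∈ S, 2 * α ≤ H.degree v := by
    intro v hv
    rw [hS, Finset.mem_filter] at hv
    have := hcon v hv.2
    omega
  have hsum : ∑ v, H.degree v = 2 * H.edgeFinset.card := H.sum_degrees_eq_twice_card_edges
  have hsum2 : ∑ v ∈ S, H.degree v ≤ ∑ v, H.degree v :=
    Finset.sum_le_sum_of_subset (Finset.subset_univ S)
  have hsum3 : 2 * α * S.card ≤ ∑ v ∈ S, H.degree v := by
    calc 2 * α * S.card = ∑ _v ∈ S, 2 * α := by rw [Finset.sum_const, smul_eq_mul, mul_comm]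
      _ ≤ ∑ v ∈ S, H.degree v := Finset.sum_le_sum hdeg
  obtain ⟨t, ht⟩ : ∃ t, S.card = t + 1 := ⟨S.card - 1, by omega⟩
  rw [ht] at hsum3 hEbound
  simp only [Nat.add_sub_cancel] at hEbound
  have hexp : 2 * α * (t + 1) = 2 * (α * t) + 2 * α := by ring
  have h2E : 2 * H.edgeFinset.card ≤ 2 * (α * t) := by omega
  omega

private lemma myAux {V : Type*} [Fintype V] (G : SimpleGraph V) (α : ℕ)
    (harb : ∃ c : Sym2 V → ℕ, (∀ e ∈ G.edgeSet, c e < α) ∧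
      ∀ i, (SimpleGraph.fromEdgeSet {e | e ∈ G.edgeSet ∧ c e = i}).IsAcyclic) :
    ∀ (n : ℕ) (H : SimpleGraph V), H ≤ G → H.edgeFinset.card ≤ n →
      ∃ f : Sym2 V → ℕ,
        (∀ u v w : V, H.Adj u v → H.Adj u w → v ≠ w → f s(u, v) ≠ f s(u, w)) ∧
        (∀ u v : V, H.Adj u v →
          1 ≤ f s(u, v) ∧ f s(u, v) ≤ max (G.degree u) (G.degree v) + 2 * α - 2) := by
  intro n
  induction n with
  | zero =>
    intro H hle hcard
    have hempty : ∀ {x y : V}, ¬ H.Adj x y := by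
      intro x y hxy
      have := Finset.card_pos.mpr ⟨_, mem_edgeFinset.mpr (H.mem_edgeSet.mpr hxy)⟩
      omega
    exact ⟨fun _ => 1, fun u v w huv _ _ => absurd huv hempty,
      fun u v huv => absurd huv hempty⟩
  | succ n ih =>
    intro H hle hcard
    by_cases h0 : H.edgeFinset.Nonempty
    swap
    · rw [Finset.not_nonempty_iff_eq_empty] at h0
      exact ih H hle (by rw [h0]; simp)
    obtain ⟨u, hdpos, hdle⟩ := myExistsLow harb hle h0
    obtain ⟨v, huv⟩ := H.degree_pos_iff_exists_adj u |>.mp hdpos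
    set e₀ := s(u, v) with he₀
    set H' := H.deleteEdges {e₀} with hH'
    have hle' : H' ≤ H := H.deleteEdges_le _
    have hedges : H'.edgeFinset = H.edgeFinset.erase e₀ := by
      ext e
      simp only [mem_edgeFinset, hH', edgeSet_deleteEdges, Set.mem_diff, Set.mem_singleton_iff,
        Finset.mem_erase, mem_edgeFinset]
      tauto
    have he0mem : e₀ ∈ H.edgeFinset := mem_edgeFinset.mpr (H.mem_edgeSet.mpr huv)
    have hcard' : H'.edgeFinset.card ≤ n := by
      rw [hedges, Finset.card_erase_of_mem he0mem]
      have := Finset.card_pos.mpr ⟨_, he0mem⟩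
      omega
    obtain ⟨f, hfp, hfb⟩ := ih H' (hle'.trans hle) (by convert hcard')
    set T := ((H.incidenceFinset u ∪ H.incidenceFinset v).erase e₀).image f with hT
    have hdv1 : 1 ≤ H.degree v := (H.degree_pos_iff_exists_adj v).mpr ⟨u, huv.symm⟩
    have hdvG : H.degree v ≤ G.degree v := by
      apply Finset.card_le_card
      intro w hw
      rw [mem_neighborFinset] at hw ⊢
      exact hle hw
    have hα : 1 ≤ α := by
      obtain ⟨c, hcα, _⟩ := harb
      have := hcα e₀ (edgeSet_mono hle (H.mem_edgeSet.mpr huv))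
      omega
    have hdvG1 : 1 ≤ G.degree v := (G.degree_pos_iff_exists_adj v).mpr ⟨u, (hle huv).symm⟩
    have hTcard : T.card ≤ (H.degree u - 1) + (H.degree v - 1) := by
      calc T.card ≤ ((H.incidenceFinset u ∪ H.incidenceFinset v).erase e₀).card :=
            Finset.card_image_le
        _ = ((H.incidenceFinset u).erase e₀ ∪ (H.incidenceFinset v).erase e₀).card := by
            rw [Finset.erase_union_distrib]
        _ ≤ ((H.incidenceFinset u).erase e₀).card + ((H.incidenceFinset v).erase e₀).card :=
            Finset.card_union_le _ _
        _ = (H.degree u - 1) + (H.degree v - 1) := by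
            rw [Finset.card_erase_of_mem, Finset.card_erase_of_mem,
              card_incidenceFinset_eq_degree, card_incidenceFinset_eq_degree]
            · rw [mem_incidenceFinset, he₀]
              exact (H.mk'_mem_incidenceSet_right_iff).mpr huv
            · rw [mem_incidenceFinset, he₀]
              exact (H.mk'_mem_incidenceSet_left_iff).mpr huv
    have hex : ((Finset.Icc 1 (G.degree v + 2 * α - 2)) \ T).Nonempty := by
      rw [← Finset.card_pos]
      have h1 := Finset.le_card_sdiff T (Finset.Icc 1 (G.degree v + 2 * α - 2))
      rw [Nat.card_Icc] at h1
      omega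
    obtain ⟨k, hk⟩ := hex
    rw [Finset.mem_sdiff, Finset.mem_Icc] at hk
    obtain ⟨⟨hk1, hk2⟩, hkT⟩ := hk
    have hmemT : ∀ (x z : V), H.Adj x z → (x = u ∨ x = v) → s(x, z) ≠ e₀ → f s(x, z) ∈ T := by
      intro x z hxz hxuv hne
      apply Finset.mem_image_of_mem
      rw [Finset.mem_erase]
      refine ⟨hne, Finset.mem_union.mpr ?_⟩
      rcases hxuv with rfl | rfl
      · exact Or.inl (by rw [mem_incidenceFinset]; exact (H.mk'_mem_incidenceSet_left_iff).mpr hxz)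
      · exact Or.inr (by rw [mem_incidenceFinset]; exact (H.mk'_mem_incidenceSet_left_iff).mpr hxz)
    refine ⟨fun e => if e = e₀ then k else f e, ?_, ?_⟩
    · intro x y z hxy hxz hyz
      have hne : s(x, y) ≠ s(x, z) := fun hc => hyz (Sym2.congr_right.mp hc)
      by_cases h1 : s(x, y) = e₀ <;> by_cases h2 : s(x, z) = e₀
      · exact absurd (h1.trans h2.symm) hne
      · simp only [if_pos h1, if_neg h2]
        have hx : x = u ∨ x = v := by
          rcases Sym2.eq_iff.mp (he₀ ▸ h1) with ⟨hxu, _⟩ | ⟨hxv, _⟩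
          · exact Or.inl hxu
          · exact Or.inr hxv
        intro hkeq
        exact hkT (hkeq ▸ hmemT x z hxz hx h2)
      · simp only [if_neg h1, if_pos h2]
        have hx : x = u ∨ x = v := by
          rcases Sym2.eq_iff.mp (he₀ ▸ h2) with ⟨hxu, _⟩ | ⟨hxv, _⟩
          · exact Or.inl hxu
          · exact Or.inr hxv
        intro hkeq
        exact hkT (hkeq ▸ hmemT x y hxy hx h1)
      · simp only [if_neg h1, if_neg h2]
        refine hfp x y z ?_ ?_ hyz
        · rw [hH', deleteEdges_adj]
          exact ⟨hxy, by simpa using h1⟩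
        · rw [hH', deleteEdges_adj]
          exact ⟨hxz, by simpa using h2⟩
    · intro x y hxy
      by_cases h1 : s(x, y) = e₀
      · simp only [if_pos h1]
        refine ⟨hk1, ?_⟩
        have hmax : G.degree v ≤ max (G.degree x) (G.degree y) := by
          rcases Sym2.eq_iff.mp (he₀ ▸ h1) with ⟨_, hyv⟩ | ⟨hxv, _⟩
          · exact hyv ▸ le_max_right _ _
          · exact hxv ▸ le_max_left _ _
        omega
      · simp only [if_neg h1]
        refine hfb x y ?_
        rw [hH', deleteEdges_adj]
        exact ⟨hxy, by simpa using h1⟩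

/-- Every graph with arboricity `α` (edges partition into `α` forests) and maximum
degree `Δ` has a proper edge colouring with at most `Δ + 2α - 2` colours, in which moreover
every edge `uv` gets a colour in `{1, ..., max(deg u, deg v) + 2α - 2}`. -/
theorem stmt7 {V : Type*} [Fintype V] (G : SimpleGraph V) (α : ℕ)
    (harb : ∃ c : Sym2 V → ℕ, (∀ e ∈ G.edgeSet, c e < α) ∧
      ∀ i, (SimpleGraph.fromEdgeSet {e | e ∈ G.edgeSet ∧ c e = i}).IsAcyclic) :
    ∃ f : Sym2 V → ℕ,
      (∀ u v w : V, G.Adj u v → G.Adj u w → v ≠ w → f s(u, v) ≠ f s(u, w)) ∧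
      (∀ u v : V, G.Adj u v →
        1 ≤ f s(u, v) ∧ f s(u, v) ≤ max (G.degree u) (G.degree v) + 2 * α - 2 ∧
          f s(u, v) ≤ G.maxDegree + 2 * α - 2) := by
  obtain ⟨f, hfp, hfb⟩ := myAux G α harb G.edgeFinset.card G le_rfl le_rfl
  refine ⟨f, hfp, fun u v huv => ?_⟩
  obtain ⟨h1, h2⟩ := hfb u v huv
  refine ⟨h1, h2, ?_⟩
  have hmax : max (G.degree u) (G.degree v) ≤ G.maxDegree :=
    max_le (G.degree_le_maxDegree u) (G.degree_le_maxDegree v)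
  omega
end

section
/- For every constant ε > 0 and graph G on n vertices with arboricity α, define Z_1 = V(G) and Z_{i+1} = {v ∈ Z_i : deg_{Z_i}(v) > (2+ε)α}. Then |Z_{i+1}| ≤ (2/(2+ε))|Z_i| for all i, and hence Z_i is empty for i > log_{(2+ε)/2}(n) + 1. -/
open scoped Classical

lemma aux_sum {V : Type*} [Fintype V] (G : SimpleGraph V) (S : Finset V) :
    ∑ v ∈ S, ((S.filter fun u => G.Adj v u).card)
      = 2 * (G.edgeFinset.filter fun e => ∀ x ∈ e, x ∈ S).card := by
  classical
  let G' : SimpleGraph V :=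
    { Adj := fun a b => a ∈ S ∧ b ∈ S ∧ G.Adj a b
      symm := by constructor; intro a b ⟨ha, hb, h⟩; exact ⟨hb, ha, h.symm⟩
      loopless := by constructor; intro a ⟨_, _, h⟩; exact G.loopless.irrefl a h }
  have hdeg : ∀ v ∈ S, G'.degree v = (S.filter fun u => G.Adj v u).card := by
    intro v hv
    unfold SimpleGraph.degree
    congr 1
    ext u
    simp [SimpleGraph.mem_neighborFinset, G', hv]
  have hdeg0 : ∀ v, v ∉ S → G'.degree v = 0 := by
    intro v hv
    rw [SimpleGraph.degree, Finset.card_eq_zero]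
    ext u
    simp [SimpleGraph.mem_neighborFinset, G', hv]
  have hedges : G'.edgeFinset = G.edgeFinset.filter fun e => ∀ x ∈ e, x ∈ S := by
    ext e
    induction e using Sym2.ind with
    | _ a b =>
      simp only [SimpleGraph.mem_edgeFinset, Finset.mem_filter, SimpleGraph.mem_edgeSet]
      constructor
      · rintro ⟨ha, hb, h⟩
        refine ⟨h, ?_⟩
        intro x hx
        rcases Sym2.mem_iff.mp hx with rfl | rfl
        · exact ha
        · exact hb
      · rintro ⟨h, hmem⟩
        exact ⟨hmem a (Sym2.mem_mk_left a b), hmem b (Sym2.mem_mk_right a b), h⟩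
  calc ∑ v ∈ S, ((S.filter fun u => G.Adj v u).card)
      = ∑ v ∈ S, G'.degree v := by
        exact Finset.sum_congr rfl fun v hv => (hdeg v hv).symm
    _ = ∑ v, G'.degree v :=
        Finset.sum_subset (Finset.subset_univ S) (fun v _ hv => hdeg0 v hv)
    _ = 2 * G'.edgeFinset.card := G'.sum_degrees_eq_twice_card_edges
    _ = 2 * (G.edgeFinset.filter fun e => ∀ x ∈ e, x ∈ S).card := by rw [hedges]

/-- For `ε > 0`, with `Z 1 = V(G)` and
`Z (i+1) = {v ∈ Z i : deg_{Z i}(v) > (2+ε)α}`, we have `|Z (i+1)| ≤ (2/(2+ε))|Z i|` for all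
`i ≥ 1`, and `Z i` is empty for `i > log_{(2+ε)/2}(n) + 1`. -/
theorem stmt14 {V : Type*} [Fintype V] (G : SimpleGraph V) (α : ℕ) (ε : ℝ) (hε : 0 < ε)
    (harb : ∀ U : Finset V, 2 ≤ U.card →
      (G.edgeFinset.filter fun e => ∀ x ∈ e, x ∈ U).card ≤ α * (U.card - 1))
    (Z : ℕ → Finset V) (hZ1 : Z 1 = Finset.univ)
    (hZ : ∀ i, 1 ≤ i → Z (i+1) = (Z i).filter
      fun v => ((2 + ε) * α : ℝ) < (((Z i).filter fun u => G.Adj v u).card : ℝ)) :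
    (∀ i, 1 ≤ i → ((Z (i+1)).card : ℝ) ≤ (2 / (2 + ε)) * (Z i).card) ∧
    (∀ i : ℕ, 1 ≤ i →
      Real.logb ((2 + ε) / 2) (Fintype.card V) + 1 < (i : ℝ) → Z i = ∅) := by
  have h2ε : (0:ℝ) < 2 + ε := by linarith
  have part1 : ∀ i, 1 ≤ i → ((Z (i+1)).card : ℝ) ≤ (2 / (2 + ε)) * (Z i).card := by
    intro i hi
    set S := Z i with hS
    have hT : Z (i+1) = S.filter
        fun v => ((2 + ε) * α : ℝ) < (((S.filter fun u => G.Adj v u).card : ℝ)) := hZ i hi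
    set T := Z (i+1)
    rcases T.eq_empty_or_nonempty with hTe | hTne
    · rw [hTe]
      simp only [Finset.card_empty, Nat.cast_zero]
      positivity
    -- T nonempty: derive strict inequality
    have hsub : T ⊆ S := by rw [hT]; exact Finset.filter_subset _ _
    have hstrict : ((2 + ε) * α) * T.card < ∑ v ∈ T, (((S.filter fun u => G.Adj v u).card : ℝ)) := by
      have := Finset.sum_lt_sum_of_nonempty hTne
        (f := fun _ : V => ((2 + ε) * α : ℝ))
        (g := fun v => (((S.filter fun u => G.Adj v u).card : ℝ)))
        (by intro v hv
            rw [hT] at hv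
            exact (Finset.mem_filter.mp hv).2)
      simpa [Finset.sum_const, nsmul_eq_mul, mul_comm] using this
    have hmono : ∑ v ∈ T, (((S.filter fun u => G.Adj v u).card : ℝ))
        ≤ ∑ v ∈ S, (((S.filter fun u => G.Adj v u).card : ℝ)) :=
      Finset.sum_le_sum_of_subset_of_nonneg hsub (by intro v _ _; positivity)
    have hSsum : ∑ v ∈ S, (((S.filter fun u => G.Adj v u).card : ℝ))
        = 2 * ((G.edgeFinset.filter fun e => ∀ x ∈ e, x ∈ S).card : ℝ) := by
      rw [← Nat.cast_sum, aux_sum G S]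
      push_cast
      ring
    have hedge : ((G.edgeFinset.filter fun e => ∀ x ∈ e, x ∈ S).card : ℝ) ≤ α * S.card := by
      by_cases hc : 2 ≤ S.card
      · have := harb S hc
        calc ((G.edgeFinset.filter fun e => ∀ x ∈ e, x ∈ S).card : ℝ)
            ≤ (α * (S.card - 1) : ℕ) := by exact_mod_cast this
          _ ≤ α * S.card := by
              push_cast
              have : ((S.card - 1 : ℕ) : ℝ) ≤ (S.card : ℝ) := by
                exact_mod_cast Nat.sub_le S.card 1
              nlinarith [Nat.cast_nonneg (α := ℝ) α]
      · -- S.card ≤ 1: no edges inside S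
        have : (G.edgeFinset.filter fun e => ∀ x ∈ e, x ∈ S) = ∅ := by
          rw [Finset.eq_empty_iff_forall_notMem]
          intro e he
          rw [Finset.mem_filter] at he
          obtain ⟨he1, he2⟩ := he
          induction e using Sym2.ind with
          | _ a b =>
            have hab : G.Adj a b := SimpleGraph.mem_edgeFinset.mp he1
            have ha : a ∈ S := he2 a (Sym2.mem_mk_left a b)
            have hb : b ∈ S := he2 b (Sym2.mem_mk_right a b)
            have : 2 ≤ S.card := Finset.one_lt_card.mpr ⟨a, ha, b, hb, hab.ne⟩
            exact hc this
        rw [this]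
        simp
        positivity
    have hαpos : (0:ℝ) < α := by
      by_contra h
      push_neg at h
      have hα0 : (α : ℝ) = 0 := le_antisymm h (Nat.cast_nonneg α)
      have h1 : (0:ℝ) < ∑ v ∈ S, (((S.filter fun u => G.Adj v u).card : ℝ)) := by
        calc (0:ℝ) = ((2 + ε) * α) * T.card := by rw [hα0]; ring
          _ < ∑ v ∈ T, (((S.filter fun u => G.Adj v u).card : ℝ)) := hstrict
          _ ≤ _ := hmono
      have h2 : ∑ v ∈ S, (((S.filter fun u => G.Adj v u).card : ℝ)) ≤ 0 := by
        rw [hSsum]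
        nlinarith [hedge, Nat.cast_nonneg (α := ℝ) S.card]
      linarith
    have key : ((2 + ε) * α) * T.card < 2 * (α * S.card) := by
      calc ((2 + ε) * α) * T.card < ∑ v ∈ T, (((S.filter fun u => G.Adj v u).card : ℝ)) := hstrict
        _ ≤ ∑ v ∈ S, _ := hmono
        _ = 2 * ((G.edgeFinset.filter fun e => ∀ x ∈ e, x ∈ S).card : ℝ) := hSsum
        _ ≤ 2 * (α * S.card) := by linarith
    rw [div_mul_eq_mul_div, le_div_iff₀ h2ε]
    nlinarith [key]
  refine ⟨part1, ?_⟩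
  -- part 2
  set n : ℕ := Fintype.card V with hn
  set r : ℝ := 2 / (2 + ε) with hr
  have hrpos : 0 < r := by positivity
  have hrb : r * ((2 + ε) / 2) = 1 := by
    field_simp [hr]
    rw [hr, div_mul_cancel₀ 2 h2ε.ne']
  have hb1 : 1 < (2 + ε) / 2 := by linarith
  have hcard : ∀ i, 1 ≤ i → ((Z i).card : ℝ) ≤ r ^ (i - 1) * n := by
    intro i hi
    induction i, hi using Nat.le_induction with
    | base => simp [hZ1, hn]
    | succ i hi ih =>
      have : ((Z (i+1)).card : ℝ) ≤ r * (Z i).card := part1 i hi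
      calc ((Z (i+1)).card : ℝ) ≤ r * (Z i).card := this
        _ ≤ r * (r ^ (i - 1) * n) := by
            exact mul_le_mul_of_nonneg_left ih (le_of_lt hrpos)
        _ = r ^ (i + 1 - 1) * n := by
            rw [← mul_assoc, ← pow_succ']
            congr 2
            omega
  intro i hi hlog
  have hlt : ((Z i).card : ℝ) < 1 := by
    rcases Nat.eq_zero_or_pos n with hn0 | hnpos
    · have := hcard i hi
      rw [hn0] at this
      have h0 : ((Z i).card : ℝ) ≤ 0 := by simpa using this
      linarith
    · have hlog2 : Real.logb ((2 + ε) / 2) n < (i : ℝ) - 1 := by linarith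
      have hxn : (0:ℝ) < n := by exact_mod_cast hnpos
      have hpow : (n : ℝ) < ((2 + ε) / 2) ^ ((i:ℝ) - 1) := by
        rw [← Real.rpow_logb (by linarith : (0:ℝ) < (2+ε)/2) (by linarith [hb1] : (2+ε)/2 ≠ 1) hxn]
        exact Real.rpow_lt_rpow_left_iff hb1 |>.mpr hlog2
      have hcast : ((i:ℝ) - 1) = ((i - 1 : ℕ) : ℝ) := by
        rw [Nat.cast_sub hi]; norm_num
      rw [hcast, Real.rpow_natCast] at hpow
      calc ((Z i).card : ℝ) ≤ r ^ (i - 1) * n := hcard i hi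
        _ < r ^ (i - 1) * ((2 + ε) / 2) ^ (i - 1) := by
            exact mul_lt_mul_of_pos_left hpow (by positivity)
        _ = (r * ((2 + ε) / 2)) ^ (i - 1) := (mul_pow _ _ _).symm
        _ = 1 := by rw [hrb, one_pow]
  have : (Z i).card = 0 := by exact_mod_cast Nat.lt_one_iff.mp (by exact_mod_cast hlt)
  exact Finset.card_eq_zero.mp this
end

section
/- Consider a potential function on a graph with vertex levels l : V → {1,...,k}: for an edge uv define ψ(uv) = 2(k - min(l(u), l(v))) + [l(u) = l(v)]. If the level of a single vertex v is incremented from i to i+1, then the total edge potential ∑_e ψ(e) decreases by at least the number of neighbours u of v with l(u) ≥ i (each such edge's potential drops by 1 or 2), and no edge potential increases. -/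
open scoped Classical

/-- The edge potential `ψ(uv) = 2(k - min(l u, l v)) + [l u = l v]`. -/
noncomputable def psi {V : Type*} (k : ℕ) (l : V → ℕ) : Sym2 V → ℤ :=
  Sym2.lift ⟨fun u w => 2 * ((k : ℤ) - min (l u) (l w)) + (if l u = l w then 1 else 0),
    fun u w => by
      have h1 : min (l u) (l w) = min (l w) (l u) := min_comm _ _
      have h2 : (if l u = l w then (1 : ℤ) else 0) = (if l w = l u then 1 else 0) := by
        simp [eq_comm]
      dsimp only
      rw [h1, h2]⟩

lemma psi_mk {V : Type*} (k : ℕ) (l : V → ℕ) (u w : V) :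
    psi k l s(u, w) = 2 * ((k : ℤ) - min (l u) (l w)) + (if l u = l w then 1 else 0) := rfl

/-- If the level of a single vertex `v` is incremented from `i` to `i + 1`, then
no edge potential increases, and the total edge potential `∑ ψ(e)` drops by at least the number
of neighbours `u` of `v` with `l u ≥ i`. -/
theorem stmt18 {V : Type*} [Fintype V] [DecidableEq V] (G : SimpleGraph V)
    (k i : ℕ) (l : V → ℕ) (v : V) (hv : l v = i) :
    (∀ e ∈ G.edgeFinset, psi k (Function.update l v (i + 1)) e ≤ psi k l e) ∧
    (∑ e ∈ G.edgeFinset, psi k (Function.update l v (i + 1)) e)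
        + ((Finset.univ.filter fun u => G.Adj v u ∧ i ≤ l u).card : ℤ)
      ≤ ∑ e ∈ G.edgeFinset, psi k l e := by
  classical
  set l' := Function.update l v (i + 1) with hl'
  have hl'v : l' v = i + 1 := Function.update_self _ _ _
  have hl'u : ∀ u, u ≠ v → l' u = l u := fun u hu => Function.update_of_ne hu _ _
  -- per-edge non-increase
  have key : ∀ e ∈ G.edgeFinset, psi k l' e ≤ psi k l e := by
    intro e he
    induction e using Sym2.ind with
    | _ u w =>
      by_cases hu : u = v
      · subst hu
        have hadj : G.Adj u w := (SimpleGraph.mem_edgeFinset.mp he)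
        have hw : w ≠ u := hadj.ne'
        rw [psi_mk, psi_mk, hl'v, hl'u w hw, hv]
        split_ifs <;> push_cast <;> omega
      · by_cases hw : w = v
        · subst hw
          have hadj : G.Adj u w := (SimpleGraph.mem_edgeFinset.mp he)
          rw [psi_mk, psi_mk, hl'v, hl'u u hu, hv]
          split_ifs <;> push_cast <;> omega
        · rw [psi_mk, psi_mk, hl'u u hu, hl'u w hw]
  refine ⟨key, ?_⟩
  -- the improving edges
  set S := Finset.univ.filter fun u => G.Adj v u ∧ i ≤ l u with hS
  set T := S.image (fun u => s(v, u)) with hT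
  have hSne : ∀ u ∈ S, u ≠ v := by
    intro u hu
    have := (Finset.mem_filter.mp hu).2.1
    exact fun h => (h ▸ this).ne rfl
  have hinj : Set.InjOn (fun u => s(v, u)) S := by
    intro a ha b hb hab
    exact Sym2.congr_right.mp hab
  have hTcard : T.card = S.card := Finset.card_image_of_injOn hinj
  have hTsub : T ⊆ G.edgeFinset := by
    intro e he
    obtain ⟨u, hu, rfl⟩ := Finset.mem_image.mp he
    exact SimpleGraph.mem_edgeFinset.mpr (Finset.mem_filter.mp hu).2.1
  have hdrop : ∀ e ∈ T, 1 ≤ psi k l e - psi k l' e := by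
    intro e he
    obtain ⟨u, hu, rfl⟩ := Finset.mem_image.mp he
    obtain ⟨-, -, hle⟩ := Finset.mem_filter.mp hu
    have hune : u ≠ v := hSne u hu
    rw [psi_mk, psi_mk, hl'v, hl'u u hune, hv]
    split_ifs <;> push_cast <;> omega
  have h1 : (S.card : ℤ) ≤ ∑ e ∈ T, (psi k l e - psi k l' e) := by
    calc (S.card : ℤ) = ∑ e ∈ T, 1 := by rw [Finset.sum_const, hTcard]; simp
    _ ≤ ∑ e ∈ T, (psi k l e - psi k l' e) := Finset.sum_le_sum hdrop
  have h2 : ∑ e ∈ T, (psi k l e - psi k l' e)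
      ≤ ∑ e ∈ G.edgeFinset, (psi k l e - psi k l' e) := by
    apply Finset.sum_le_sum_of_subset_of_nonneg hTsub
    intro e he _
    have := key e he
    omega
  have h3 : ∑ e ∈ G.edgeFinset, (psi k l e - psi k l' e)
      = ∑ e ∈ G.edgeFinset, psi k l e - ∑ e ∈ G.edgeFinset, psi k l' e :=
    Finset.sum_sub_distrib _ _
  rw [h3] at h2
  linarith [le_trans h1 h2]
end

section
/- Let G be a graph with arboricity α, and partition levels 1,...,L·⌈log₂ n⌉ into groups of size L = 1 + ⌈log₂ n⌉, where a vertex at level in group g has at most 2·5·2^g out-neighbours (neighbours at its level or higher) and at least 2^g neighbours at the level directly below. Then every vertex lies in a group g ≤ ⌈log₂(4α)⌉; in particular the maximum level is O(log α · log n). -/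
open scoped Classical

/-- In the levelled structure with `L = 1 + ⌈log₂ n⌉` levels per group (levels
`1, ..., L⌈log₂ n⌉`, the group of a vertex being `g v = ⌈l v / L⌉`), if every vertex has at most
`2·5·2^(g v)` out-neighbours (neighbours at its level or above) and, when `l v > 1`, at least
`2^(g v)` neighbours at the level directly below, and `G` has arboricity at most `α ≥ 1`, then
every vertex lies in a group `g v ≤ ⌈log₂ (4α)⌉`. -/
theorem stmt19 {V : Type*} [Fintype V] (G : SimpleGraph V) (α : ℕ) (hα : 1 ≤ α)
    (n L : ℕ) (hn : n = Fintype.card V) (hL : L = 1 + Nat.clog 2 n)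
    (l g : V → ℕ) (hg : ∀ v, g v = (l v + L - 1) / L)
    (hrange : ∀ v, 1 ≤ l v ∧ l v ≤ L * Nat.clog 2 n)
    (harb : ∀ U : Finset V, 2 ≤ U.card →
      (G.edgeFinset.filter fun e => ∀ x ∈ e, x ∈ U).card ≤ α * (U.card - 1))
    (hout : ∀ v : V,
      (Finset.univ.filter fun u => G.Adj v u ∧ l v ≤ l u).card ≤ 2 * 5 * 2 ^ (g v))
    (hdown : ∀ v : V, 1 < l v →
      2 ^ (g v) ≤ (Finset.univ.filter fun u => G.Adj v u ∧ l u = l v - 1).card) :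
    ∀ v : V, g v ≤ Nat.clog 2 (4 * α) := by
  intro v
  by_contra hcon
  push_neg at hcon
  have hL1 : 1 ≤ L := by omega
  set C := Nat.clog 2 (4 * α) with hCdef
  have hC2 : 2 ≤ C := by
    have h4 : Nat.clog 2 4 ≤ C := Nat.clog_mono_right 2 (by omega)
    have h42 : Nat.clog 2 4 = 2 := by
      rw [show (4:ℕ) = 2^2 by norm_num, Nat.clog_pow _ _ one_lt_two]
    omega
  have hpow : 4 * α ≤ 2 ^ C := Nat.le_pow_clog (by norm_num) _
  have hmul : L * (C - 1) + L = C * L := by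
    rw [mul_comm C L, ← Nat.mul_succ, Nat.succ_eq_add_one, Nat.sub_add_cancel (by omega)]
  set T : ℕ → Finset V := fun j => Finset.univ.filter (fun u => j ≤ l u) with hTdef
  set D : V → Finset V :=
    fun w => Finset.univ.filter (fun u => G.Adj w u ∧ l u = l w - 1) with hDdef
  set j₀ : ℕ := L * (C - 1) + 1 with hj0def
  -- members of T j for j ≥ j₀ + 1 have level ≥ 2 and group power ≥ 4α
  have hmemT : ∀ j w, w ∈ T j ↔ j ≤ l w := by
    intro j w; simp [hTdef]
  have hmem : ∀ j, j₀ + 1 ≤ j → ∀ w ∈ T j, 2 ≤ l w ∧ 4 * α ≤ 2 ^ g w := by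
    intro j hj w hw
    rw [hmemT] at hw
    have h2 : 2 ≤ l w := by omega
    have hgC : C ≤ g w := by
      rw [hg, Nat.le_div_iff_mul_le (by omega : 0 < L)]
      omega
    exact ⟨h2, le_trans hpow (Nat.pow_le_pow_right (by norm_num) hgC)⟩
  -- D w ⊆ T (j-1) for w ∈ T j
  have hDsub : ∀ j, 2 ≤ j → ∀ w ∈ T j, D w ⊆ T (j - 1) := by
    intro j hj w hw u hu
    rw [hmemT] at hw ⊢
    simp only [hDdef, Finset.mem_filter] at hu
    omega
  -- key counting: 4α |T j| ≤ #edges inside T (j-1)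
  have key : ∀ j, j₀ + 1 ≤ j →
      4 * α * (T j).card ≤
        (G.edgeFinset.filter fun e => ∀ x ∈ e, x ∈ T (j - 1)).card := by
    intro j hj
    have hDcard : ∀ w ∈ T j, 4 * α ≤ (D w).card := by
      intro w hw
      obtain ⟨h2, h4⟩ := hmem j hj w hw
      exact le_trans h4 (hdown w (by omega))
    calc 4 * α * (T j).card = ∑ w ∈ T j, 4 * α := by
          rw [Finset.sum_const, smul_eq_mul, mul_comm]
      _ ≤ ∑ w ∈ T j, (D w).card := Finset.sum_le_sum hDcard
      _ = ((T j).sigma D).card := (Finset.card_sigma _ _).symm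
      _ ≤ _ := by
          apply Finset.card_le_card_of_injOn (fun p => s(p.1, p.2))
          · rintro ⟨a, b⟩ hp
            simp only [Finset.mem_coe, Finset.mem_sigma] at hp
            obtain ⟨ha, hb⟩ := hp
            simp only [hDdef, Finset.mem_filter, Finset.mem_univ, true_and] at hb
            obtain ⟨hadj, hlb⟩ := hb
            simp only [Finset.mem_coe, Finset.mem_filter, SimpleGraph.mem_edgeFinset,
              SimpleGraph.mem_edgeSet]
            refine ⟨hadj, ?_⟩
            intro x hx
            rw [Sym2.mem_iff] at hx
            rw [hmemT] at ha ⊢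
            rcases hx with rfl | rfl <;> omega
          · rintro ⟨a₁, b₁⟩ hp₁ ⟨a₂, b₂⟩ hp₂ heq
            simp only [Finset.mem_coe, Finset.mem_sigma] at hp₁ hp₂
            obtain ⟨ha₁, hb₁⟩ := hp₁
            obtain ⟨ha₂, hb₂⟩ := hp₂
            simp only [hDdef, Finset.mem_filter, Finset.mem_univ, true_and] at hb₁ hb₂
            rw [hmemT] at ha₁ ha₂
            have h2 : 2 ≤ j := by omega
            simp only [Sym2.eq_iff] at heq
            rcases heq with ⟨rfl, rfl⟩ | ⟨rfl, rfl⟩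
            · rfl
            · exfalso; omega
  -- halving
  have halve : ∀ j, j₀ + 1 ≤ j → 2 * (T j).card ≤ (T (j - 1)).card := by
    intro j hj
    have hk := key j hj
    by_cases h2 : 2 ≤ (T (j - 1)).card
    · have he := harb (T (j - 1)) h2
      have h3 : 4 * α * (T j).card ≤ α * ((T (j - 1)).card - 1) := le_trans hk he
      have h4 : α * (4 * (T j).card) ≤ α * ((T (j - 1)).card - 1) := by
        calc α * (4 * (T j).card) = 4 * α * (T j).card := by ring
          _ ≤ _ := h3
      have h5 := Nat.le_of_mul_le_mul_left h4 (by omega : 0 < α)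
      omega
    · -- T (j-1) has ≤ 1 vertex: no edges inside it, so T j empty
      have hE : (G.edgeFinset.filter fun e => ∀ x ∈ e, x ∈ T (j - 1)).card = 0 := by
        rw [Finset.card_eq_zero, Finset.eq_empty_iff_forall_notMem]
        intro e he
        induction e using Sym2.ind with
        | _ a b =>
          simp only [Finset.mem_filter, SimpleGraph.mem_edgeFinset,
            SimpleGraph.mem_edgeSet] at he
          obtain ⟨hadj, hin⟩ := he
          have ha := hin a (by simp)
          have hb := hin b (by simp)
          have hane : a ≠ b := hadj.ne
          have : 2 ≤ (T (j - 1)).card := Finset.one_lt_card.mpr ⟨a, ha, b, hb, hane⟩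
          omega
      rw [hE] at hk
      have : (T j).card = 0 := by
        rcases Nat.eq_zero_or_pos (T j).card with h | h
        · exact h
        · exfalso; nlinarith
      omega
  -- iterate halving
  have iter : ∀ k, 2 ^ k * (T (j₀ + k)).card ≤ (T j₀).card := by
    intro k
    induction k with
    | zero => simp
    | succ k ih =>
      have hh := halve (j₀ + k + 1) (by omega)
      have : j₀ + k + 1 - 1 = j₀ + k := by omega
      rw [this] at hh
      calc 2 ^ (k + 1) * (T (j₀ + (k + 1))).card
          = 2 ^ k * (2 * (T (j₀ + k + 1)).card) := by
            rw [show j₀ + (k+1) = j₀ + k + 1 by omega]; ring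
        _ ≤ 2 ^ k * (T (j₀ + k)).card :=
            Nat.mul_le_mul_left _ hh
        _ ≤ (T j₀).card := ih
  -- v is in T (j₀ + L)
  have hlv : j₀ + L ≤ l v := by
    have hgv : C + 1 ≤ g v := hcon
    rw [hg] at hgv
    have := (Nat.le_div_iff_mul_le (by omega : 0 < L)).mp hgv
    have h1 : (C + 1) * L = C * L + L := by ring
    omega
  have hvT : v ∈ T (j₀ + L) := by rw [hmemT]; exact hlv
  have hcard1 : 1 ≤ (T (j₀ + L)).card := Finset.card_pos.mpr ⟨v, hvT⟩
  have hn1 : 1 ≤ n := by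
    rw [hn]
    exact Fintype.card_pos_iff.mpr ⟨v⟩
  have hTn : (T j₀).card ≤ n := by
    rw [hn]
    exact le_trans (Finset.card_le_card (Finset.filter_subset _ _)) (by simp)
  have h2L : 2 * n ≤ 2 ^ L := by
    rw [hL, pow_add, pow_one]
    exact Nat.mul_le_mul_left 2 (Nat.le_pow_clog one_lt_two n)
  have hfin := iter L
  have : 2 ^ L ≤ (T j₀).card := by
    calc 2 ^ L = 2 ^ L * 1 := by ring
      _ ≤ 2 ^ L * (T (j₀ + L)).card := Nat.mul_le_mul_left _ hcard1
      _ ≤ (T j₀).card := hfin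
  omega
end
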